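/- arXiv:2111.01117 — 2 statements merged into one kernel-verified Lean document; each statement's English description precedes it below -/
import Mathlib

section
/- Let k be a field and R a discrete valuation ring containing k, with residue field ℓ and fraction field K. If ℓ has finite transcendence degree over k, then trdeg_k ℓ < trdeg_k K. -/
open IsLocalRing

/-- The transcendence degree of a commutative ring `L` over a commutative ring `k`, relative to
the ring homomorphism `f : k →+* L`: the supremum of cardinalities of subsets of `L` that are
algebraically independent over `k`. -/
noncomputable def RingHom.trdeg {k L : Type*} [CommRing k] [CommRing L] (f : k →+* L) :
    Cardinal :=
  letI : Algebra k L := f.toAlgebra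
  ⨆ s : { s : Set L // AlgebraicIndependent k ((↑) : s → L) }, Cardinal.mk s.1

section Helpers

variable {k L : Type*} [CommRing k] [CommRing L]

/-- Algebraic independence only depends on the algebra map. -/
theorem algebraicIndependent_congr_inst {ι : Type*} {A1 A2 : Algebra k L}
    (h : @algebraMap k L _ _ A1 = @algebraMap k L _ _ A2) {x : ι → L} :
    (@AlgebraicIndependent ι k L x _ _ A1) ↔ @AlgebraicIndependent ι k L x _ _ A2 := by
  obtain rfl : A1 = A2 := Algebra.algebra_ext A1 A2 fun r => by rw [h]
  rfl

theorem mk_le_trdeg (f : k →+* L) (s : Set L)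
    (hs : letI := f.toAlgebra; AlgebraicIndependent k ((↑) : s → L)) :
    Cardinal.mk s ≤ f.trdeg := by
  letI := f.toAlgebra
  exact le_ciSup (Cardinal.bddAbove_range _)
    (⟨s, hs⟩ : { s : Set L // AlgebraicIndependent k ((↑) : s → L) })

theorem exists_mk_eq_trdeg (f : k →+* L) (hinj : Function.Injective f)
    (hfin : f.trdeg < Cardinal.aleph0) :
    ∃ s : Set L, (letI := f.toAlgebra; AlgebraicIndependent k ((↑) : s → L)) ∧
      Cardinal.mk s = f.trdeg := by
  letI := f.toAlgebra
  have hempty : AlgebraicIndependent k ((↑) : (∅ : Set L) → L) := by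
    rw [algebraicIndependent_empty_iff]
    rwa [RingHom.algebraMap_toAlgebra]
  haveI : Nonempty { s : Set L // AlgebraicIndependent k ((↑) : s → L) } := ⟨⟨∅, hempty⟩⟩
  obtain ⟨n, hn⟩ := Cardinal.lt_aleph0.1 hfin
  cases n with
  | zero =>
      refine ⟨∅, hempty, ?_⟩
      rw [hn]
      simp
  | succ m =>
      have hlt : (m : Cardinal) <
          ⨆ s : { s : Set L // AlgebraicIndependent k ((↑) : s → L) }, Cardinal.mk s.1 := by
        have : (m : Cardinal) < f.trdeg := by
          rw [hn]; exact_mod_cast Nat.lt_succ_self m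
        exact this
      obtain ⟨i, hi⟩ := exists_lt_of_lt_ciSup hlt
      refine ⟨i.1, i.2, le_antisymm (mk_le_trdeg f i.1 i.2) ?_⟩
      rw [hn]
      have h1 : (m : Cardinal) + 1 ≤ Cardinal.mk i.1 :=
        (Cardinal.add_one_le_succ _).trans (Order.succ_le_of_lt hi)
      exact_mod_cast h1

end Helpers

/-- Let `k` be a field and `R` a DVR containing `k`, with residue field `ℓ` and fraction field
`K`. If `trdeg_k ℓ` is finite, then `trdeg_k ℓ < trdeg_k K`. -/
theorem trdeg_residueField_lt_trdeg_fractionRing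
    (k : Type*) (R : Type*) [Field k] [CommRing R] [IsDomain R] [IsDiscreteValuationRing R]
    [Algebra k R]
    (hfin : RingHom.trdeg ((residue R).comp (algebraMap k R)) < Cardinal.aleph0) :
    RingHom.trdeg ((residue R).comp (algebraMap k R)) <
      RingHom.trdeg (algebraMap k (FractionRing R)) := by
  classical
  set f : k →+* ResidueField R := (residue R).comp (algebraMap k R) with hf
  have hfinj : Function.Injective f := f.injective
  obtain ⟨s, hs, hcard⟩ := exists_mk_eq_trdeg f hfinj hfin
  -- transfer to the standard `Algebra k (ResidueField R)` instance
  have hs' : AlgebraicIndependent k ((↑) : s → ResidueField R) :=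
    (algebraicIndependent_congr_inst (A1 := f.toAlgebra) (A2 := inferInstance)
      ((RingHom.algebraMap_toAlgebra f).trans rfl)).1 hs
  -- lift `s` to `R`
  choose x hx using fun a : s => IsLocalRing.residue_surjective (R := R) (a : ResidueField R)
  let φ : R →ₐ[k] ResidueField R := { residue R with commutes' := fun _ => rfl }
  have hxind : AlgebraicIndependent k x := by
    apply AlgebraicIndependent.of_comp φ
    have hcomp : ⇑φ ∘ x = ((↑) : s → ResidueField R) := funext fun a => hx a
    rw [hcomp]
    exact hs'
  obtain ⟨π, hπ⟩ := IsDiscreteValuationRing.exists_irreducible R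
  -- nonzero elements of the adjoin have nonzero residue
  have hker : ∀ a : R, a ∈ Algebra.adjoin k (Set.range x) → residue R a = 0 → a = 0 := by
    intro a ha h0
    rw [Algebra.adjoin_range_eq_range_aeval] at ha
    obtain ⟨Q, rfl⟩ := ha
    have h1 : MvPolynomial.aeval ((↑) : s → ResidueField R) Q = 0 := by
      have h2 : φ (MvPolynomial.aeval x Q) = MvPolynomial.aeval (fun i => φ (x i)) Q :=
        MvPolynomial.comp_aeval_apply x φ Q
      have hcomp : (fun i : s => φ (x i)) = ((↑) : s → ResidueField R) :=
        funext fun a => hx a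
      rw [hcomp] at h2
      rw [← h2]
      exact h0
    have hQ : Q = 0 := algebraicIndependent_iff.1 hs' Q h1
    simp [hQ]
  -- `π` is transcendental over the adjoin of the lifts
  set A := Algebra.adjoin k (Set.range x) with hA
  have htrans : Transcendental A π := by
    rintro ⟨p, hp0, hpe⟩
    have hmapinj : Function.Injective (algebraMap A R) := Subtype.val_injective
    set q : Polynomial R := p.map (algebraMap A R) with hqdef
    have hq0 : q ≠ 0 := (Polynomial.map_ne_zero_iff hmapinj).2 hp0
    have hqe : q.eval π = 0 := by
      rw [hqdef, Polynomial.eval_map, ← Polynomial.aeval_def, hpe]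
    set n := q.natTrailingDegree with hn
    obtain ⟨q₂, hq₂⟩ : (Polynomial.X ^ n : Polynomial R) ∣ q :=
      Polynomial.X_pow_dvd_iff.2 fun d hd => Polynomial.coeff_eq_zero_of_lt_natTrailingDegree hd
    have hπ0 : π ≠ 0 := hπ.ne_zero
    have hq2e : q₂.eval π = 0 := by
      have h3 : π ^ n * q₂.eval π = 0 := by
        have := hqe
        rw [hq₂] at this
        simpa using this
      rcases mul_eq_zero.1 h3 with h | h
      · exact absurd h (pow_ne_zero _ hπ0)
      · exact h
    have hdvd : π ∣ q₂.coeff 0 := by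
      have h4 := Polynomial.sub_dvd_eval_sub π 0 q₂
      rw [sub_zero, hq2e, zero_sub, dvd_neg] at h4
      rwa [Polynomial.coeff_zero_eq_eval_zero]
    have hcoeffn : q.coeff n = q₂.coeff 0 := by
      rw [hq₂]
      simpa using Polynomial.coeff_X_pow_mul q₂ n 0
    have hres : residue R (q.coeff n) = 0 := by
      apply Ideal.Quotient.eq_zero_iff_mem.2
      rw [hπ.maximalIdeal_eq, Ideal.mem_span_singleton, hcoeffn]
      exact hdvd
    have hmem : q.coeff n ∈ A := by
      rw [hqdef, Polynomial.coeff_map]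
      exact SetLike.coe_mem (p.coeff n)
    have hzero : q.coeff n = 0 := hker _ hmem hres
    exact hq0 (Polynomial.trailingCoeff_eq_zero.1 hzero)
  -- extend the family by `π` and map it into the fraction field
  have hopt : AlgebraicIndependent k (fun o : Option s => o.elim π x) :=
    (hxind.option_iff_transcendental π).2 htrans
  have hK : AlgebraicIndependent k
      (⇑(IsScalarTower.toAlgHom k R (FractionRing R)) ∘ fun o : Option s => o.elim π x) :=
    hopt.map ((IsFractionRing.injective R (FractionRing R)).injOn)
  set w : Option s → FractionRing R :=
    ⇑(IsScalarTower.toAlgHom k R (FractionRing R)) ∘ fun o : Option s => o.elim π x with hw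
  have hwinj : Function.Injective w := hK.injective
  have ht : AlgebraicIndependent k ((↑) : Set.range w → FractionRing R) := hK.coe_range
  have hle : Cardinal.mk (Set.range w) ≤ (algebraMap k (FractionRing R)).trdeg :=
    mk_le_trdeg _ _ ((algebraicIndependent_congr_inst (A1 := inferInstance)
      (A2 := (algebraMap k (FractionRing R)).toAlgebra)
      (RingHom.algebraMap_toAlgebra (algebraMap k (FractionRing R))).symm).1 ht)
  have hmk : Cardinal.mk (Set.range w) = Cardinal.mk s + 1 := by
    rw [Cardinal.mk_range_eq _ hwinj, Cardinal.mk_option]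
  have hlt : Cardinal.mk s < Cardinal.mk s + 1 := by
    have : Cardinal.mk s < Cardinal.aleph0 := hcard ▸ hfin
    obtain ⟨m, hm⟩ := Cardinal.lt_aleph0.1 this
    rw [hm]
    exact_mod_cast Nat.lt_succ_self m
  calc f.trdeg = Cardinal.mk s := hcard.symm
    _ < Cardinal.mk s + 1 := hlt
    _ = Cardinal.mk (Set.range w) := hmk.symm
    _ ≤ (algebraMap k (FractionRing R)).trdeg := hle
end

section
/- Let A ⊆ R be a weakly unramified inclusion of discrete valuation rings (a uniformizer of A is a uniformizer of R), with residue fields k ⊆ ℓ and fraction fields K ⊆ L. If elements u_1, ..., u_n of R have residues in ℓ that are algebraically independent over k, then u_1, ..., u_n are algebraically independent over K in L. -/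
open IsLocalRing

/-- Algebraic independence of a family `v` in `L` over `k`, relative to a ring homomorphism
`f : k →+* L`. -/
def RingHom.AlgIndep {k L ι : Type*} [CommRing k] [CommRing L] (f : k →+* L) (v : ι → L) :
    Prop :=
  letI : Algebra k L := f.toAlgebra
  AlgebraicIndependent k v

lemma RingHom.algIndep_iff {k L ι : Type*} [CommRing k] [CommRing L] (f : k →+* L)
    (v : ι → L) :
    f.AlgIndep v ↔ ∀ p : MvPolynomial ι k, MvPolynomial.eval₂ f v p = 0 → p = 0 := by
  letI : Algebra k L := f.toAlgebra
  rw [RingHom.AlgIndep, algebraicIndependent_iff]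
  simp only [MvPolynomial.aeval_def, RingHom.algebraMap_toAlgebra]

/-- Factor out the largest power of the uniformizer from a nonzero multivariate polynomial over
a DVR; the quotient has some coefficient a unit. -/
lemma exists_unit_coeff_factor {A : Type*} [CommRing A] [IsDomain A] [IsDiscreteValuationRing A]
    {π : A} (hπ : Ideal.span {π} = maximalIdeal A) {σ : Type*}
    (q : MvPolynomial σ A) (hq : q ≠ 0) :
    ∃ (m : ℕ) (q' : MvPolynomial σ A), q = MvPolynomial.C (π ^ m) * q' ∧
      ∃ s, IsUnit (q'.coeff s) := by
  classical
  have hirr : Irreducible π := (IsDiscreteValuationRing.irreducible_iff_uniformizer π).mpr hπ.symm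
  -- pick a nonzero coefficient and a bound on divisibility
  obtain ⟨s₀, hs₀⟩ : ∃ s, q.coeff s ≠ 0 := by
    by_contra h
    push_neg at h
    exact hq (MvPolynomial.ext _ _ fun s => by simp [h s])
  obtain ⟨k, w, hkw⟩ := IsDiscreteValuationRing.eq_unit_mul_pow_irreducible hs₀ hirr
  have hw : IsUnit (w : A) := w.isUnit
  have hbound : ¬ π ^ (k + 1) ∣ q.coeff s₀ := by
    intro hdvd
    rw [hkw] at hdvd
    obtain ⟨c, hc⟩ := hdvd
    have hπ0 : π ≠ 0 := hirr.ne_zero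
    have : w = π * c := by
      have h2 : π ^ k * w = π ^ k * (π * c) := by ring_nf; ring_nf at hc; linear_combination hc
      exact mul_left_cancel₀ (pow_ne_zero k hπ0) h2
    exact hirr.not_isUnit (isUnit_of_dvd_unit ⟨c, this⟩ hw)
  set P : ℕ → Prop := fun m => ∀ s, π ^ m ∣ q.coeff s with hP
  have hP0 : P 0 := fun s => by simp
  set M := Nat.findGreatest P (k + 1) with hM
  have hPM : P M := Nat.findGreatest_spec (Nat.zero_le _) hP0
  have hMne : M ≠ k + 1 := fun h => hbound (by rw [← h]; exact hPM s₀)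
  have hMlt : M < k + 1 := lt_of_le_of_ne (Nat.findGreatest_le _) hMne
  have hnot : ¬ P (M + 1) := Nat.findGreatest_is_greatest (Nat.lt_succ_self M) hMlt
  obtain ⟨q', hq'⟩ : MvPolynomial.C (π ^ M) ∣ q :=
    (MvPolynomial.C_dvd_iff_dvd_coeff _ _).mpr hPM
  refine ⟨M, q', hq', ?_⟩
  simp only [hP] at hnot
  push_neg at hnot
  obtain ⟨s₁, hs₁⟩ := hnot
  have hndvd : ¬ π ∣ q'.coeff s₁ := by
    intro ⟨c, hc⟩
    exact hs₁ ⟨c, by rw [hq', MvPolynomial.coeff_C_mul, hc]; ring⟩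
  by_contra hnu
  push_neg at hnu
  apply hndvd
  rw [← Ideal.mem_span_singleton, hπ]
  exact (IsLocalRing.mem_maximalIdeal _).mpr (hnu s₁)

set_option maxHeartbeats 1000000 in
/-- Let `A ⊆ R` be a weakly unramified injective local inclusion of DVRs (a uniformizer `π` of
`A` maps to a uniformizer of `R`), with residue fields `k ⊆ ℓ` and fraction fields `K ⊆ L`. If
`u₁, …, uₙ ∈ R` have residues in `ℓ` that are algebraically independent over `k`, then
`u₁, …, uₙ` are algebraically independent over `K` in `L`. -/
theorem algIndep_fractionField_of_algIndep_residueField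
    (A : Type*) [CommRing A] [IsDomain A] [IsDiscreteValuationRing A]
    (R : Type*) [CommRing R] [IsDomain R] [IsDiscreteValuationRing R]
    (f : A →+* R) [IsLocalHom f] (hf : Function.Injective f)
    (π : A) (hπ : Ideal.span {π} = maximalIdeal A)
    (hram : Ideal.span {f π} = maximalIdeal R)
    (n : ℕ) (u : Fin n → R)
    (hu : RingHom.AlgIndep (ResidueField.map f) fun i => residue R (u i)) :
    RingHom.AlgIndep (IsFractionRing.lift (K := FractionRing A) (L := FractionRing R)
        (g := (algebraMap R (FractionRing R)).comp f)
        ((IsFractionRing.injective R (FractionRing R)).comp hf))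
      (fun i => algebraMap R (FractionRing R) (u i)) := by
  classical
  rw [RingHom.algIndep_iff] at hu ⊢
  intro p hp
  by_contra hp0
  set K := FractionRing A
  set L := FractionRing R
  set g : A →+* K := algebraMap A K with hg
  set F : K →+* L := IsFractionRing.lift (K := K) (L := L)
      (g := (algebraMap R L).comp f)
      ((IsFractionRing.injective R L).comp hf) with hF
  set v : Fin n → L := fun i => algebraMap R L (u i) with hv
  -- clear denominators
  obtain ⟨b, hb⟩ := IsLocalization.exist_integer_multiples (nonZeroDivisors A) p.support p.coeff
  set p' : MvPolynomial (Fin n) K := MvPolynomial.C (g (b : A)) * p with hp'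
  have hint : ∀ d, ∃ a : A, g a = p'.coeff d := by
    intro d
    rw [hp', MvPolynomial.coeff_C_mul]
    by_cases hd : d ∈ p.support
    · obtain ⟨a, ha⟩ := hb d hd
      exact ⟨a, by rw [ha, Algebra.smul_def]⟩
    · exact ⟨0, by simp [MvPolynomial.notMem_support_iff.mp hd]⟩
  set φ : K → A := fun x => if h : ∃ a : A, g a = x then h.choose else 0 with hφ
  have hφ0 : φ 0 = 0 := by
    have h0 : ∃ a : A, g a = (0 : K) := ⟨0, map_zero g⟩
    rw [hφ]
    dsimp only
    rw [dif_pos h0]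
    exact IsFractionRing.injective A K (by rw [h0.choose_spec, map_zero])
  set q : MvPolynomial (Fin n) A := .ofCoeff <| Finsupp.mapRange φ hφ0 <| AddMonoidAlgebra.coeff p' with hq
  have hmapq : MvPolynomial.map g q = p' := by
    rw [hq, MvPolynomial.map_mapRange_eq_iff]
    intro d
    obtain ⟨a, ha⟩ := hint d
    rw [hφ]
    dsimp only
    rw [dif_pos ⟨a, ha⟩]
    exact Exists.choose_spec (⟨a, ha⟩ : ∃ a : A, g a = p'.coeff d)
  have hgb : g (b : A) ≠ 0 := fun h =>
    nonZeroDivisors.coe_ne_zero b ((IsFractionRing.to_map_eq_zero_iff (K := K)).mp h)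
  have hp'0 : p' ≠ 0 := by
    rw [hp']
    exact mul_ne_zero (fun h => hgb (by simpa using (MvPolynomial.C_eq_zero (a := g (b:A))).mp h)) hp0
  have hq0 : q ≠ 0 := fun h => hp'0 (by rw [← hmapq, h]; simp)
  -- evaluate q in R
  have h1 : MvPolynomial.eval₂ F v p' = 0 := by
    rw [hp', MvPolynomial.eval₂_mul, MvPolynomial.eval₂_C, hp, mul_zero]
  have h2 : MvPolynomial.eval₂ (F.comp g) v q = 0 := by
    rw [← MvPolynomial.eval₂_map, hmapq, h1]
  have hcomp : F.comp g = (algebraMap R L).comp f := by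
    ext a
    rw [RingHom.comp_apply, hF, hg]
    exact IsFractionRing.lift_algebraMap (show Function.Injective ⇑((algebraMap R L).comp f) from (IsFractionRing.injective R L).comp hf) a
  have h3 : MvPolynomial.eval₂ ((algebraMap R L).comp f) v q = 0 := by
    rw [← hcomp]; exact h2
  have h5 : MvPolynomial.eval₂ f u q = 0 := by
    apply IsFractionRing.injective R L
    rw [map_zero, MvPolynomial.eval₂_comp_left (algebraMap R L) f u q]
    exact h3
  -- factor out powers of π
  obtain ⟨m, q', hqq', s₁, hs₁⟩ := exists_unit_coeff_factor hπ q hq0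
  have hfπ : f π ≠ 0 := by
    intro h
    apply IsDiscreteValuationRing.not_a_field R
    rw [← hram, h, Ideal.span_singleton_eq_bot]
  have h6 : MvPolynomial.eval₂ f u q' = 0 := by
    rw [hqq', MvPolynomial.eval₂_mul, MvPolynomial.eval₂_C, map_pow] at h5
    exact (mul_eq_zero.mp h5).resolve_left (pow_ne_zero m hfπ)
  -- reduce mod the maximal ideal
  have h7 : MvPolynomial.eval₂ ((residue R).comp f) (residue R ∘ u) q' = 0 := by
    rw [← MvPolynomial.eval₂_comp_left (residue R) f u q', h6, map_zero]
  have hrescomp : (residue R).comp f = (ResidueField.map f).comp (residue A) := by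
    ext a
    exact (ResidueField.map_residue f a).symm
  have h8 : MvPolynomial.eval₂ (ResidueField.map f) (fun i => residue R (u i))
      (MvPolynomial.map (residue A) q') = 0 := by
    rw [MvPolynomial.eval₂_map, ← hrescomp]
    exact h7
  have h9 := hu _ h8
  have := congrArg (MvPolynomial.coeff s₁) h9
  rw [MvPolynomial.coeff_map, MvPolynomial.coeff_zero] at this
  exact (hs₁.map (residue A)).ne_zero this
end
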